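/- Fix a real constant c > 0, set r = ln(4)/c, and fix an integer n ≥ 1. Define, for any map t : {1,2,…} → ℕ, U_c(t) = ∑_{k=1}^∞ 4^{−k}·exp(−t_k·c). Suppose t is a transmission policy of length n (∑_{k≥1} t_k = n) that is efficient for c (U_c(t) ≤ U_c(t') for every transmission policy t' of length n). Then for all indices k1, k2 ≥ 1 with t_{k1} ≥ 1 and t_{k2} ≥ 1, one has (k2 − k1)·r − 1 ≤ t_{k1} − t_{k2} ≤ (k2 − k1)·r + 1 (as inequalities between real numbers). -/

import Mathlib

/-- Upper bound on the end-to-end distortion of a transmission pattern `t : {1,2,…} → ℕ`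
(indexed here by `k ↦ t (k+1)`): `U_c(t) = ∑_{k≥1} 4^{−k} exp(−t_k c)`. -/
noncomputable def distortionUB (c : ℝ) (t : ℕ → ℕ) : ℝ :=
  ∑' k : ℕ, (4 : ℝ)⁻¹ ^ (k + 1) * Real.exp (-(t (k + 1) : ℝ) * c)

/-- A transmission policy of length `n`: `∑_{k≥1} t_k = n`. -/
def IsPolicy (n : ℕ) (t : ℕ → ℕ) : Prop :=
  (∑' k : ℕ, (t (k + 1) : ENNReal)) = n

/-- A policy of length `n` is efficient for `c` if it minimizes `U_c` among all policies
of length `n`. -/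
def IsEfficient (c : ℝ) (n : ℕ) (t : ℕ → ℕ) : Prop :=
  IsPolicy n t ∧ ∀ t' : ℕ → ℕ, IsPolicy n t' → distortionUB c t ≤ distortionUB c t'

private lemma summable_aux {u : ℕ → ℝ} (hu : ∀ k, 0 ≤ u k ∧ u k ≤ (4 : ℝ)⁻¹ ^ (k + 1)) :
    Summable u := by
  apply Summable.of_nonneg_of_le (fun k => (hu k).1) (fun k => (hu k).2)
  have : Summable (fun k : ℕ => (4 : ℝ)⁻¹ ^ k) :=
    summable_geometric_of_lt_one (by norm_num) (by norm_num)
  simpa [pow_succ, mul_comm] using this.mul_right (4 : ℝ)⁻¹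

private lemma term_bounds (c : ℝ) (hc : 0 < c) (m k : ℕ) :
    0 ≤ (4 : ℝ)⁻¹ ^ (k + 1) * Real.exp (-(m : ℝ) * c) ∧
    (4 : ℝ)⁻¹ ^ (k + 1) * Real.exp (-(m : ℝ) * c) ≤ (4 : ℝ)⁻¹ ^ (k + 1) := by
  constructor
  · positivity
  · have h1 : Real.exp (-(m : ℝ) * c) ≤ 1 := by
      rw [Real.exp_le_one_iff]
      have : (0:ℝ) ≤ (m : ℝ) * c := by positivity
      linarith
    nlinarith [pow_pos (by norm_num : (0:ℝ) < (4:ℝ)⁻¹) (k + 1)]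

set_option maxHeartbeats 1000000 in
private lemma key (c : ℝ) (hc : 0 < c) (n : ℕ) (t : ℕ → ℕ)
    (heff : IsEfficient c n t) (k1 k2 : ℕ) (h1 : 1 ≤ k1) (h2 : 1 ≤ k2)
    (hne : k1 ≠ k2) (ht2 : 1 ≤ t k2) :
    ((k2 : ℝ) - k1) * (Real.log 4 / c) ≤ (t k1 : ℝ) - t k2 + 1 := by
  set t' : ℕ → ℕ := fun k => if k = k1 then t k1 + 1 else if k = k2 then t k2 - 1 else t k
    with ht'
  set a := k1 - 1 with ha'
  set b := k2 - 1 with hb'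
  have ha : a + 1 = k1 := Nat.succ_pred_eq_of_pos h1
  have hb : b + 1 = k2 := Nat.succ_pred_eq_of_pos h2
  have hab : a ≠ b := fun h => hne (by rw [← ha, ← hb, h])
  have ht'a : t' (a + 1) = t k1 + 1 := by simp [ht', ha]
  have ht'b : t' (b + 1) = t k2 - 1 := by
    simp [ht', hb, Ne.symm hne]
  have ht'other : ∀ k, k ≠ a → k ≠ b → t' (k + 1) = t (k + 1) := by
    intro k hka hkb
    have h1' : k + 1 ≠ k1 := fun h => hka (by omega)
    have h2' : k + 1 ≠ k2 := fun h => hkb (by omega)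
    simp [ht', h1', h2']
  -- t' is a policy
  have hpol : IsPolicy n t' := by
    have hp := heff.1
    unfold IsPolicy at hp ⊢
    rw [Summable.tsum_eq_add_tsum_ite' a ENNReal.summable,
        Summable.tsum_eq_add_tsum_ite' b ENNReal.summable] at hp ⊢
    rw [← hp]
    have hrest : (∑' k : ℕ, if k = b then 0 else if k = a then 0 else (t' (k + 1) : ENNReal))
        = (∑' k : ℕ, if k = b then 0 else if k = a then 0 else (t (k + 1) : ENNReal)) := by
      apply tsum_congr
      intro k
      by_cases hk1 : k = b
      · simp [hk1]
      · by_cases hk2 : k = a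
        · simp [hk1, hk2]
        · simp [hk1, hk2, ht'other k hk2 hk1]
    rw [if_neg hab.symm, if_neg hab.symm, hrest]
    rw [← add_assoc, ← add_assoc]
    congr 1
    rw [ht'a, ht'b]
    have : (t k1 + 1) + (t k2 - 1) = t (a + 1) + t (b + 1) := by rw [ha, hb]; omega
    rw [← Nat.cast_add, ← Nat.cast_add, this]
  -- efficiency inequality
  have hle := heff.2 t' hpol
  unfold distortionUB at hle
  set F : ℕ → ℝ := fun k => (4 : ℝ)⁻¹ ^ (k + 1) * Real.exp (-(t (k + 1) : ℝ) * c) with hF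
  set G : ℕ → ℝ := fun k => (4 : ℝ)⁻¹ ^ (k + 1) * Real.exp (-(t' (k + 1) : ℝ) * c) with hG
  have hFs : Summable F := summable_aux (fun k => term_bounds c hc _ k)
  have hGs : Summable G := summable_aux (fun k => term_bounds c hc _ k)
  rw [← Summable.sum_add_tsum_compl (f := F) (s := ({a, b} : Finset ℕ)) hFs,
      ← Summable.sum_add_tsum_compl (f := G) (s := ({a, b} : Finset ℕ)) hGs,
      Finset.sum_pair hab, Finset.sum_pair hab] at hle
  have hrest : (∑' x : ↑((({a, b} : Finset ℕ) : Set ℕ)ᶜ), F x.1)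
      = ∑' x : ↑((({a, b} : Finset ℕ) : Set ℕ)ᶜ), G x.1 := by
    apply tsum_congr
    intro x
    have hx := x.2
    simp only [Set.mem_compl_iff, Finset.coe_insert, Set.mem_insert_iff,
      Finset.coe_singleton, Set.mem_singleton_iff, not_or] at hx
    simp only [hF, hG, ht'other x.1 hx.1 hx.2]
  rw [hrest] at hle
  have hkey : F a + F b ≤ G a + G b := by linarith
  -- unfold the four terms
  have hcast : ((t k2 - 1 : ℕ) : ℝ) = (t k2 : ℝ) - 1 := by
    rw [Nat.cast_sub ht2]; norm_num
  have hFa : F a = (4 : ℝ)⁻¹ ^ k1 * Real.exp (-(t k1 : ℝ) * c) := by rw [hF]; simp [ha]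
  have hFb : F b = (4 : ℝ)⁻¹ ^ k2 * Real.exp (-(t k2 : ℝ) * c) := by rw [hF]; simp [hb]
  have hGa : G a = (4 : ℝ)⁻¹ ^ k1 * Real.exp (-(t k1 : ℝ) * c - c) := by
    simp only [hG]
    rw [ht'a, ha]
    push_cast
    rw [show -((t k1 : ℝ) + 1) * c = -(t k1 : ℝ) * c - c by ring]
  have hGb : G b = (4 : ℝ)⁻¹ ^ k2 * Real.exp (-(t k2 : ℝ) * c + c) := by
    simp only [hG]
    rw [ht'b, hb, hcast]
    rw [show -((t k2 : ℝ) - 1) * c = -(t k2 : ℝ) * c + c by ring]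
  rw [hFa, hFb, hGa, hGb] at hkey
  -- derive the exponential inequality
  set q1 := (4 : ℝ)⁻¹ ^ k1
  set q2 := (4 : ℝ)⁻¹ ^ k2
  set E1 := Real.exp (-(t k1 : ℝ) * c)
  set E2 := Real.exp (-(t k2 : ℝ) * c)
  have hE1 : Real.exp (-(t k1 : ℝ) * c - c) = E1 * Real.exp (-c) := by
    rw [← Real.exp_add]; ring_nf
  have hE2 : Real.exp (-(t k2 : ℝ) * c + c) = E2 * Real.exp c := by
    rw [← Real.exp_add]
  rw [hE1, hE2] at hkey
  have hec : Real.exp (-c) < 1 := by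
    rw [Real.exp_lt_one_iff]; linarith
  have hfactor : Real.exp c - 1 = Real.exp c * (1 - Real.exp (-c)) := by
    have : Real.exp c * Real.exp (-c) = 1 := by
      rw [← Real.exp_add]; simp
    nlinarith
  have hmain : q1 * E1 ≤ q2 * E2 * Real.exp c := by
    have h' : q1 * E1 * (1 - Real.exp (-c)) ≤ q2 * E2 * (Real.exp c - 1) := by nlinarith
    rw [hfactor] at h'
    have hpos : 0 < 1 - Real.exp (-c) := by linarith
    nlinarith
  -- take logs
  have hq1 : q1 = Real.exp (-(k1 : ℝ) * Real.log 4) := by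
    rw [show -(k1:ℝ) * Real.log 4 = (k1:ℝ) * (-Real.log 4) by ring, ← Real.log_inv,
        Real.exp_nat_mul, Real.exp_log (by norm_num)]
  have hq2 : q2 = Real.exp (-(k2 : ℝ) * Real.log 4) := by
    rw [show -(k2:ℝ) * Real.log 4 = (k2:ℝ) * (-Real.log 4) by ring, ← Real.log_inv,
        Real.exp_nat_mul, Real.exp_log (by norm_num)]
  have hexp : Real.exp (-(k1 : ℝ) * Real.log 4 + -(t k1 : ℝ) * c)
      ≤ Real.exp (-(k2 : ℝ) * Real.log 4 + -(t k2 : ℝ) * c + c) := by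
    rw [Real.exp_add, Real.exp_add, Real.exp_add]
    rw [hq1, hq2] at hmain
    exact hmain
  have hlin := Real.exp_le_exp.mp hexp
  rw [show ((k2 : ℝ) - k1) * (Real.log 4 / c) = (((k2 : ℝ) - k1) * Real.log 4) / c by ring,
      div_le_iff₀ hc]
  nlinarith [hlin]

/-- Second bullet of Lemma 1: for an efficient policy and transmitted indices `k1, k2`,
`(k2 − k1)·r − 1 ≤ t_{k1} − t_{k2} ≤ (k2 − k1)·r + 1` with `r = ln 4 / c`. -/
theorem stmt_9 (c : ℝ) (hc : 0 < c) (n : ℕ) (hn : 1 ≤ n) (t : ℕ → ℕ)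
    (heff : IsEfficient c n t) :
    ∀ k1 k2 : ℕ, 1 ≤ k1 → 1 ≤ k2 → 1 ≤ t k1 → 1 ≤ t k2 →
      ((k2 : ℝ) - k1) * (Real.log 4 / c) - 1 ≤ (t k1 : ℝ) - t k2 ∧
      (t k1 : ℝ) - t k2 ≤ ((k2 : ℝ) - k1) * (Real.log 4 / c) + 1 := by
  intro k1 k2 hk1 hk2 ht1 ht2
  by_cases hne : k1 = k2
  · subst hne
    simp
  · have hlo := key c hc n t heff k1 k2 hk1 hk2 hne ht2
    have hhi := key c hc n t heff k2 k1 hk2 hk1 (Ne.symm hne) ht1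
    have hswap : ((k1 : ℝ) - k2) * (Real.log 4 / c)
        = -(((k2 : ℝ) - k1) * (Real.log 4 / c)) := by ring
    rw [hswap] at hhi
    constructor <;> linarith
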